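/- Let α be a root of a monic irreducible integer polynomial of degree 4, p a prime, R = ℤ + pℤ[α], I = pR + pαR, and J = pR + pα²R. Then N(I) = N(J) = p³ while N(IJ) = p⁵; in particular N(I)N(J) > N(IJ). -/

import Mathlib

open Polynomial in
private lemma aux_minpoly_eq (α : ℂ) (f : ℤ[X]) (hmonic : f.Monic) (hirr : Irreducible f)
    (hroot : aeval α f = 0) : minpoly ℤ α = f := by
  have hint : IsIntegral ℤ α := ⟨f, hmonic, by rwa [← aeval_def]⟩
  have hdvd : minpoly ℤ α ∣ f := minpoly.isIntegrallyClosed_dvd hint hroot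
  obtain ⟨t, ht⟩ := hdvd
  rcases hirr.isUnit_or_isUnit ht with h | h
  · exact absurd h (minpoly.not_isUnit ℤ α)
  · exact Polynomial.eq_of_monic_of_associated (minpoly.monic hint) hmonic ⟨h.unit, by rw [ht]; rfl⟩

open Polynomial in
private lemma aux_lin (α : ℂ) (f : ℤ[X]) (hmonic : f.Monic) (hirr : Irreducible f)
    (hdeg : f.natDegree = 4) (hroot : aeval α f = 0)
    (m n k l : ℤ) (h : (m:ℂ) + n*α + k*α^2 + l*α^3 = 0) :
    m = 0 ∧ n = 0 ∧ k = 0 ∧ l = 0 := by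
  have hmin : minpoly ℤ α = f := aux_minpoly_eq α f hmonic hirr hroot
  have hint : IsIntegral ℤ α := ⟨f, hmonic, by rwa [← aeval_def]⟩
  set g : ℤ[X] := C m + C n * X + C k * X^2 + C l * X^3 with hg
  have haeval : aeval α g = 0 := by
    simp only [hg, map_add, map_mul, map_pow, aeval_C, aeval_X]
    simp only [algebraMap_int_eq, eq_intCast]
    exact h
  have hg0 : g = 0 := by
    by_contra hgne
    have hd : minpoly ℤ α ∣ g := minpoly.isIntegrallyClosed_dvd hint haeval
    have h4 := Polynomial.natDegree_le_of_dvd hd hgne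
    rw [hmin, hdeg] at h4
    have h3 : g.natDegree ≤ 3 := by
      rw [hg]; compute_degree
    omega
  refine ⟨?_, ?_, ?_, ?_⟩
  · have := congrArg (fun q => Polynomial.coeff q 0) hg0
    simp only [hg, coeff_add, coeff_C_mul, coeff_C, coeff_X_pow, coeff_X, coeff_zero] at this
    norm_num at this; exact this
  · have := congrArg (fun q => Polynomial.coeff q 1) hg0
    simp only [hg, coeff_add, coeff_C_mul, coeff_C, coeff_X_pow, coeff_X, coeff_zero] at this
    norm_num at this; exact this
  · have := congrArg (fun q => Polynomial.coeff q 2) hg0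
    simp only [hg, coeff_add, coeff_C_mul, coeff_C, coeff_X_pow, coeff_X, coeff_zero] at this
    norm_num at this; exact this
  · have := congrArg (fun q => Polynomial.coeff q 3) hg0
    simp only [hg, coeff_add, coeff_C_mul, coeff_C, coeff_X_pow, coeff_X, coeff_zero] at this
    norm_num at this; exact this

open Polynomial in
private lemma aux_closure (α : ℂ) (f : ℤ[X]) (hmonic : f.Monic)
    (hdeg : f.natDegree = 4) (hroot : aeval α f = 0)
    (w : ℂ) (hw : w ∈ Subring.closure {α}) :
    ∃ e0 e1 e2 e3 : ℤ, w = e0 + e1*α + e2*α^2 + e3*α^3 := by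
  have hle : Subring.closure {α} ≤ (Polynomial.aeval α (R := ℤ)).toRingHom.range := by
    rw [Subring.closure_le]
    rintro x rfl
    exact ⟨Polynomial.X, by simp⟩
  obtain ⟨g, hg⟩ := hle hw
  have hmod : aeval α (g %ₘ f) = w := by
    have hdm := Polynomial.modByMonic_add_div g f
    have := congrArg (aeval α) hdm
    simp only [map_add, map_mul, hroot, zero_mul, add_zero] at this
    rw [this]; exact hg
  set r := g %ₘ f with hr
  have hlt : r.natDegree < 4 := by
    by_cases h0 : r = 0
    · simp [h0]
    · have := Polynomial.degree_modByMonic_lt g hmonic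
      rw [← hr] at this
      have h2 : r.degree < 4 := by
        rwa [Polynomial.degree_eq_natDegree (hmonic.ne_zero), hdeg] at this
      exact_mod_cast (Polynomial.natDegree_lt_iff_degree_lt h0).mpr h2
  have hsum := Polynomial.aeval_eq_sum_range' hlt α
  rw [hsum] at hmod
  refine ⟨r.coeff 0, r.coeff 1, r.coeff 2, r.coeff 3, ?_⟩
  rw [← hmod]
  simp [Finset.sum_range_succ, zsmul_eq_mul]

open Polynomial in
private lemma aux_alpha4 (α : ℂ) (f : ℤ[X]) (hmonic : f.Monic)
    (hdeg : f.natDegree = 4) (hroot : aeval α f = 0) :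
    α^4 = -((f.coeff 0 : ℂ) + f.coeff 1 * α + f.coeff 2 * α^2 + f.coeff 3 * α^3) := by
  have h5 : f.natDegree < 5 := by omega
  have hs := Polynomial.aeval_eq_sum_range' h5 α
  rw [hroot] at hs
  have h4 : f.coeff 4 = 1 := by
    have := hmonic.leadingCoeff
    rwa [Polynomial.leadingCoeff, hdeg] at this
  simp [Finset.sum_range_succ, zsmul_eq_mul, h4] at hs
  linear_combination -hs

private lemma card_quot {G : Type*} [CommRing G] (I : Ideal G) {H : Type*} [AddCommGroup H]
    (φ : G →+ H) (hsurj : Function.Surjective φ)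
    (hker : ∀ x, x ∈ I ↔ φ x = 0) :
    Nat.card (G ⧸ I) = Nat.card H := by
  have h1 : I.toAddSubgroup = φ.ker := by
    ext x; simpa using hker x
  have : Nat.card (G ⧸ I.toAddSubgroup) = Nat.card H := by
    rw [h1]
    exact Nat.card_congr (QuotientAddGroup.quotientKerEquivOfSurjective φ hsurj).toEquiv
  exact this

theorem stmt11 (α : ℂ) (f : Polynomial ℤ) (hmonic : f.Monic) (hirr : Irreducible f)
    (hdeg : f.natDegree = 4) (hroot : Polynomial.aeval α f = 0)
    (p : ℕ) (hp : p.Prime)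
    (R : Subring ℂ)
    (hR : (R : Set ℂ) = {x | ∃ m : ℤ, ∃ w ∈ Subring.closure {α}, x = m + p * w})
    (a b c : ↥R) (ha : (a : ℂ) = p) (hb : (b : ℂ) = p * α) (hc : (c : ℂ) = p * α ^ 2) :
    Nat.card (↥R ⧸ Ideal.span {a, b}) = p ^ 3 ∧
    Nat.card (↥R ⧸ Ideal.span {a, c}) = p ^ 3 ∧
    Nat.card (↥R ⧸ (Ideal.span {a, b} * Ideal.span {a, c})) = p ^ 5 ∧
    Nat.card (↥R ⧸ (Ideal.span {a, b} * Ideal.span {a, c})) <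
      Nat.card (↥R ⧸ Ideal.span {a, b}) * Nat.card (↥R ⧸ Ideal.span {a, c}) := by
  classical
  have hpz : (p:ℤ) ≠ 0 := by exact_mod_cast hp.pos.ne'
  set C0 : ℤ := f.coeff 0 with hC0
  set C1 : ℤ := f.coeff 1 with hC1
  set C2 : ℤ := f.coeff 2 with hC2
  set C3 : ℤ := f.coeff 3 with hC3
  have hα4 : α^4 = -((C0 : ℂ) + C1 * α + C2 * α^2 + C3 * α^3) :=
    aux_alpha4 α f hmonic hdeg hroot
  have hα5 : α^5 = (C0:ℂ)*C3 + ((C1:ℂ)*C3 - C0) * α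
      + ((C2:ℂ)*C3 - C1) * α^2 + ((C3:ℂ)^2 - C2) * α^3 := by
    linear_combination (α - (C3:ℂ)) * hα4
  have hα6 : α^6 = -((C0:ℂ)*((C3:ℂ)^2 - C2)) + ((C0:ℂ)*C3 - (C1:ℂ)*((C3:ℂ)^2 - C2)) * α
      + ((C1:ℂ)*C3 - C0 - (C2:ℂ)*((C3:ℂ)^2 - C2)) * α^2
      + ((C2:ℂ)*C3 - C1 - (C3:ℂ)*((C3:ℂ)^2 - C2)) * α^3 := by
    linear_combination α * hα5 + ((C3:ℂ)^2 - (C2:ℂ)) * hα4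
  -- decomposition of elements of R
  have hmem : ∀ x : ↥R, ∃ m n k l : ℤ,
      (x:ℂ) = m + n*((p:ℂ)*α) + k*((p:ℂ)*α^2) + l*((p:ℂ)*α^3) := by
    intro x
    have hx : (x:ℂ) ∈ (R : Set ℂ) := x.2
    rw [hR] at hx
    obtain ⟨m, w, hw, hxw⟩ := hx
    obtain ⟨e0, e1, e2, e3, hwe⟩ := aux_closure α f hmonic hdeg hroot w hw
    exact ⟨m + p*e0, e1, e2, e3, by rw [hxw, hwe]; push_cast; ring⟩
  choose cm cn ck cl hco using hmem
  -- uniqueness of coordinates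
  have hU : ∀ (x : ↥R) (m n k l : ℤ),
      (x:ℂ) = m + n*((p:ℂ)*α) + k*((p:ℂ)*α^2) + l*((p:ℂ)*α^3) →
      cm x = m ∧ cn x = n ∧ ck x = k ∧ cl x = l := by
    intro x m n k l h
    have h0 : ((cm x - m : ℤ) : ℂ) + ((p*(cn x - n) : ℤ) : ℂ)*α
        + ((p*(ck x - k) : ℤ) : ℂ)*α^2 + ((p*(cl x - l) : ℤ) : ℂ)*α^3 = 0 := by
      push_cast
      linear_combination h - hco x
    obtain ⟨e1, e2, e3, e4⟩ := aux_lin α f hmonic hirr hdeg hroot _ _ _ _ h0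
    have g2 : cn x - n = 0 := by
      rcases mul_eq_zero.mp e2 with h' | h' 
      · exact absurd h' hpz
      · exact h'
    have g3 : ck x - k = 0 := by
      rcases mul_eq_zero.mp e3 with h' | h'
      · exact absurd h' hpz
      · exact h'
    have g4 : cl x - l = 0 := by
      rcases mul_eq_zero.mp e4 with h' | h'
      · exact absurd h' hpz
      · exact h'
    exact ⟨by omega, by omega, by omega, by omega⟩
  -- constructing elements of R
  have hmk : ∀ m n k l : ℤ, ((m:ℂ) + n*((p:ℂ)*α) + k*((p:ℂ)*α^2) + l*((p:ℂ)*α^3)) ∈ R := by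
    intro m n k l
    have : ((m:ℂ) + n*((p:ℂ)*α) + k*((p:ℂ)*α^2) + l*((p:ℂ)*α^3)) ∈ (R : Set ℂ) := by
      rw [hR]
      have hα : α ∈ Subring.closure {α} := Subring.subset_closure rfl
      refine ⟨m, (n:ℂ)*α + (k:ℂ)*α^2 + (l:ℂ)*α^3, ?_, by push_cast; ring⟩
      exact add_mem (add_mem (mul_mem (intCast_mem (Subring.closure {α}) n) hα)
        (mul_mem (intCast_mem (Subring.closure {α}) k) (pow_mem hα 2)))
        (mul_mem (intCast_mem (Subring.closure {α}) l) (pow_mem hα 3))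
    exact this
  have hdR : ((p:ℂ) * α^3) ∈ R := by
    have := hmk 0 0 0 1
    push_cast at this
    simpa using this
  set d : ↥R := ⟨(p:ℂ) * α^3, hdR⟩ with hd0
  have hd : (d:ℂ) = (p:ℂ) * α^3 := rfl
  -- additivity of coordinates
  have hadd : ∀ x y : ↥R, cm (x+y) = cm x + cm y ∧ cn (x+y) = cn x + cn y ∧
      ck (x+y) = ck x + ck y ∧ cl (x+y) = cl x + cl y := by
    intro x y
    refine hU (x+y) _ _ _ _ ?_
    have hxy : ((x + y : ↥R) : ℂ) = (x:ℂ) + (y:ℂ) := by push_cast; ring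
    rw [hxy, hco x, hco y]
    push_cast
    ring
  -- coordinates of products with a, b, c, d
  have hmulA : ∀ x : ↥R, cm (a*x) = (p:ℤ) * cm x ∧ cn (a*x) = (p:ℤ) * cn x ∧
      ck (a*x) = (p:ℤ) * ck x ∧ cl (a*x) = (p:ℤ) * cl x := by
    intro x
    refine hU _ _ _ _ _ ?_
    have hax : ((a*x : ↥R) : ℂ) = (a:ℂ) * (x:ℂ) := by push_cast; ring
    rw [hax, ha, hco x]
    push_cast
    ring
  have hmulB : ∀ x : ↥R, cm (b*x) = -((p:ℤ)^2*C0*cl x) ∧ cn (b*x) = cm x - (p:ℤ)*C1*cl x ∧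
      ck (b*x) = (p:ℤ)*cn x - (p:ℤ)*C2*cl x ∧ cl (b*x) = (p:ℤ)*ck x - (p:ℤ)*C3*cl x := by
    intro x
    refine hU _ _ _ _ _ ?_
    have hax : ((b*x : ↥R) : ℂ) = (b:ℂ) * (x:ℂ) := by push_cast; ring
    rw [hax, hb, hco x]
    push_cast
    linear_combination ((p:ℂ)^2 * (cl x : ℂ)) * hα4
  have hmulC : ∀ x : ↥R, cm (c*x) = (p:ℤ)^2*(C0*C3*cl x - C0*ck x) ∧
      cn (c*x) = (p:ℤ)*((C1*C3 - C0)*cl x - C1*ck x) ∧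
      ck (c*x) = cm x - (p:ℤ)*C2*ck x + (p:ℤ)*(C2*C3 - C1)*cl x ∧
      cl (c*x) = (p:ℤ)*cn x - (p:ℤ)*C3*ck x + (p:ℤ)*(C3^2 - C2)*cl x := by
    intro x
    refine hU _ _ _ _ _ ?_
    have hax : ((c*x : ↥R) : ℂ) = (c:ℂ) * (x:ℂ) := by push_cast; ring
    rw [hax, hc, hco x]
    push_cast
    linear_combination ((p:ℂ)^2 * (ck x : ℂ)) * hα4 + ((p:ℂ)^2 * (cl x : ℂ)) * hα5
  have hmulD : ∀ x : ↥R, cm (d*x) = (p:ℤ)^2*(-(C0*cn x) + C0*C3*ck x - C0*(C3^2 - C2)*cl x) ∧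
      cn (d*x) = (p:ℤ)*(-(C1*cn x) + (C1*C3 - C0)*ck x + (C0*C3 - C1*(C3^2 - C2))*cl x) ∧
      ck (d*x) = (p:ℤ)*(-(C2*cn x) + (C2*C3 - C1)*ck x + (C1*C3 - C0 - C2*(C3^2 - C2))*cl x) ∧
      cl (d*x) = cm x + (p:ℤ)*(-(C3*cn x) + (C3^2 - C2)*ck x + (C2*C3 - C1 - C3*(C3^2 - C2))*cl x) := by
    intro x
    refine hU _ _ _ _ _ ?_
    have hax : ((d*x : ↥R) : ℂ) = (d:ℂ) * (x:ℂ) := by push_cast; ring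
    rw [hax, hd, hco x]
    push_cast
    linear_combination ((p:ℂ)^2 * (cn x : ℂ)) * hα4 + ((p:ℂ)^2 * (ck x : ℂ)) * hα5
      + ((p:ℂ)^2 * (cl x : ℂ)) * hα6
  have hbc : b * c = a * d := by
    apply Subtype.ext
    push_cast
    rw [hb, hc, ha]
    ring
  -- casting helpers
  have hzd : ∀ t : ℤ, (p:ℤ) ∣ t → ((t : ZMod p) = 0) := by
    intro t ht
    rw [ZMod.intCast_zmod_eq_zero_iff_dvd]
    exact_mod_cast ht
  have hzd2 : ∀ t : ℤ, (p:ℤ)^2 ∣ t → ((t : ZMod (p^2)) = 0) := by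
    intro t ht
    rw [ZMod.intCast_zmod_eq_zero_iff_dvd]
    push_cast
    exact ht
  have hzd' : ∀ t : ℤ, ((t : ZMod p) = 0) → (p:ℤ) ∣ t := by
    intro t ht
    have := (ZMod.intCast_zmod_eq_zero_iff_dvd t p).mp ht
    exact_mod_cast this
  have hzd2' : ∀ t : ℤ, ((t : ZMod (p^2)) = 0) → (p:ℤ)^2 ∣ t := by
    intro t ht
    have := (ZMod.intCast_zmod_eq_zero_iff_dvd t (p^2)).mp ht
    push_cast at this
    exact this
  -- the additive maps
  let π1 : ↥R →+ (ZMod p × ZMod p × ZMod p) :=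
    AddMonoidHom.mk' (fun x => ((cm x : ZMod p), (ck x : ZMod p), (cl x : ZMod p)))
      (by
        intro x y
        obtain ⟨h1, h2, h3, h4⟩ := hadd x y
        simp only [h1, h3, h4, Prod.mk_add_mk, Int.cast_add])
  have hπ1 : ∀ x : ↥R, π1 x = ((cm x : ZMod p), (ck x : ZMod p), (cl x : ZMod p)) :=
    fun _ => rfl
  let πJ : ↥R →+ (ZMod p × ZMod p × ZMod p) :=
    AddMonoidHom.mk' (fun x => ((cm x : ZMod p), (cn x : ZMod p), (cl x : ZMod p)))
      (by
        intro x y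
        obtain ⟨h1, h2, h3, h4⟩ := hadd x y
        simp only [h1, h2, h4, Prod.mk_add_mk, Int.cast_add])
  have hπJ : ∀ x : ↥R, πJ x = ((cm x : ZMod p), (cn x : ZMod p), (cl x : ZMod p)) :=
    fun _ => rfl
  let π2 : ↥R →+ (ZMod (p^2) × ZMod p × ZMod p × ZMod p) :=
    AddMonoidHom.mk' (fun x => ((cm x : ZMod (p^2)), (cn x : ZMod p), (ck x : ZMod p), (cl x : ZMod p)))
      (by
        intro x y
        obtain ⟨h1, h2, h3, h4⟩ := hadd x y
        simp only [h1, h2, h3, h4, Prod.mk_add_mk, Int.cast_add])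
  have hπ2 : ∀ x : ↥R, π2 x = ((cm x : ZMod (p^2)), (cn x : ZMod p), (ck x : ZMod p), (cl x : ZMod p)) :=
    fun _ => rfl
  -- generators membership
  have haI : a ∈ Ideal.span {a, b} := Ideal.subset_span (by simp)
  have hbI : b ∈ Ideal.span {a, b} := Ideal.subset_span (by simp)
  have haJ : a ∈ Ideal.span {a, c} := Ideal.subset_span (by simp)
  have hcJ : c ∈ Ideal.span {a, c} := Ideal.subset_span (by simp)
  -- kernel of π1 is I
  have hkerI : ∀ x : ↥R, x ∈ Ideal.span {a, b} ↔ π1 x = 0 := by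
    intro x
    constructor
    · intro hx
      obtain ⟨r, s, hrs⟩ := Ideal.mem_span_pair.mp hx
      have hx2 : x = a*r + b*s := by rw [← hrs]; ring
      have e1 : π1 (a*r) = 0 := by
        rw [hπ1, (hmulA r).1, (hmulA r).2.2.1, (hmulA r).2.2.2]
        simp only [Prod.mk_eq_zero]
        exact ⟨hzd _ ⟨cm r, rfl⟩, hzd _ ⟨ck r, rfl⟩, hzd _ ⟨cl r, rfl⟩⟩
      have e2 : π1 (b*s) = 0 := by
        rw [hπ1, (hmulB s).1, (hmulB s).2.2.1, (hmulB s).2.2.2]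
        simp only [Prod.mk_eq_zero]
        exact ⟨hzd _ ⟨-((p:ℤ)*C0*cl s), by ring⟩, hzd _ ⟨cn s - C2*cl s, by ring⟩,
          hzd _ ⟨ck s - C3*cl s, by ring⟩⟩
      rw [hx2, map_add, e1, e2, add_zero]
    · intro hx
      rw [hπ1] at hx
      simp only [Prod.mk_eq_zero] at hx
      obtain ⟨h0, h2, h3⟩ := hx
      obtain ⟨m', hm'⟩ := hzd' _ h0
      obtain ⟨k', hk'⟩ := hzd' _ h2
      obtain ⟨l', hl'⟩ := hzd' _ h3
      have hx2 : x = (m' : ↥R)*a + ((cn x : ℤ) : ↥R)*b + (k' : ↥R)*(a*c) + (l' : ↥R)*(a*d) := by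
        apply Subtype.ext
        push_cast
        rw [ha, hb, hc, hco x, hm', hk', hl']
        push_cast
        ring
      rw [hx2]
      exact add_mem (add_mem (add_mem (Ideal.mul_mem_left _ _ haI) (Ideal.mul_mem_left _ _ hbI))
        (Ideal.mul_mem_left _ _ (Ideal.mul_mem_right _ _ haI)))
        (Ideal.mul_mem_left _ _ (Ideal.mul_mem_right _ _ haI))
  -- kernel of πJ is J
  have hkerJ : ∀ x : ↥R, x ∈ Ideal.span {a, c} ↔ πJ x = 0 := by
    intro x
    constructor
    · intro hx
      obtain ⟨r, s, hrs⟩ := Ideal.mem_span_pair.mp hx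
      have hx2 : x = a*r + c*s := by rw [← hrs]; ring
      have e1 : πJ (a*r) = 0 := by
        rw [hπJ, (hmulA r).1, (hmulA r).2.1, (hmulA r).2.2.2]
        simp only [Prod.mk_eq_zero]
        exact ⟨hzd _ ⟨cm r, rfl⟩, hzd _ ⟨cn r, rfl⟩, hzd _ ⟨cl r, rfl⟩⟩
      have e2 : πJ (c*s) = 0 := by
        rw [hπJ, (hmulC s).1, (hmulC s).2.1, (hmulC s).2.2.2]
        simp only [Prod.mk_eq_zero]
        exact ⟨hzd _ ⟨(p:ℤ)*(C0*C3*cl s - C0*ck s), by ring⟩,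
          hzd _ ⟨(C1*C3 - C0)*cl s - C1*ck s, rfl⟩,
          hzd _ ⟨cn s - C3*ck s + (C3^2 - C2)*cl s, by ring⟩⟩
      rw [hx2, map_add, e1, e2, add_zero]
    · intro hx
      rw [hπJ] at hx
      simp only [Prod.mk_eq_zero] at hx
      obtain ⟨h0, h1, h3⟩ := hx
      obtain ⟨m', hm'⟩ := hzd' _ h0
      obtain ⟨n', hn'⟩ := hzd' _ h1
      obtain ⟨l', hl'⟩ := hzd' _ h3
      have hx2 : x = (m' : ↥R)*a + (n' : ↥R)*(a*b) + ((ck x : ℤ) : ↥R)*c + (l' : ↥R)*(a*d) := by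
        apply Subtype.ext
        push_cast
        rw [ha, hb, hc, hco x, hm', hn', hl']
        push_cast
        ring
      rw [hx2]
      exact add_mem (add_mem (add_mem (Ideal.mul_mem_left _ _ haJ)
        (Ideal.mul_mem_left _ _ (Ideal.mul_mem_right _ _ haJ)))
        (Ideal.mul_mem_left _ _ hcJ))
        (Ideal.mul_mem_left _ _ (Ideal.mul_mem_right _ _ haJ))
  -- kernel of π2 is I*J
  have hker2 : ∀ x : ↥R, x ∈ Ideal.span {a, b} * Ideal.span {a, c} ↔ π2 x = 0 := by
    have key : ∀ y : ↥R, (p:ℤ) ∣ cm y → π2 (a*y) = 0 := by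
      rintro y ⟨t, ht⟩
      rw [hπ2, (hmulA y).1, (hmulA y).2.1, (hmulA y).2.2.1, (hmulA y).2.2.2]
      simp only [Prod.mk_eq_zero]
      exact ⟨hzd2 _ ⟨t, by rw [ht]; ring⟩, hzd _ ⟨cn y, rfl⟩, hzd _ ⟨ck y, rfl⟩,
        hzd _ ⟨cl y, rfl⟩⟩
    intro x
    constructor
    · intro hx
      refine Submodule.mul_induction_on hx ?_ ?_
      · intro i hi j hj
        obtain ⟨r1, s1, hi'⟩ := Ideal.mem_span_pair.mp hi
        obtain ⟨r2, s2, hj'⟩ := Ideal.mem_span_pair.mp hj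
        have hexp : i*j = a*(a*(r1*r2)) + a*(c*(r1*s2)) + a*(b*(s1*r2)) + a*(d*(s1*s2)) := by
          have h1 : i*j = a*(a*(r1*r2)) + a*(c*(r1*s2)) + a*(b*(s1*r2)) + (b*c)*(s1*s2) := by
            rw [← hi', ← hj']; ring
          rw [h1, hbc]; ring
        rw [hexp, map_add, map_add, map_add]
        rw [key _ ⟨cm (r1*r2), (hmulA _).1⟩,
          key _ ⟨(p:ℤ)*(C0*C3*cl (r1*s2) - C0*ck (r1*s2)), by rw [(hmulC _).1]; ring⟩,
          key _ ⟨-((p:ℤ)*C0*cl (s1*r2)), by rw [(hmulB _).1]; ring⟩,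
          key _ ⟨(p:ℤ)*(-(C0*cn (s1*s2)) + C0*C3*ck (s1*s2) - C0*(C3^2 - C2)*cl (s1*s2)),
            by rw [(hmulD _).1]; ring⟩]
        simp
      · intro u v hu hv
        rw [map_add, hu, hv, add_zero]
    · intro hx
      rw [hπ2] at hx
      simp only [Prod.mk_eq_zero] at hx
      obtain ⟨h0, h1, h2, h3⟩ := hx
      obtain ⟨m', hm'⟩ := hzd2' _ h0
      obtain ⟨n', hn'⟩ := hzd' _ h1
      obtain ⟨k', hk'⟩ := hzd' _ h2
      obtain ⟨l', hl'⟩ := hzd' _ h3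
      have hx2 : x = (m' : ↥R)*(a*a) + (n' : ↥R)*(b*a) + (k' : ↥R)*(a*c) + (l' : ↥R)*(b*c) := by
        apply Subtype.ext
        push_cast
        rw [ha, hb, hc, hco x, hm', hn', hk', hl']
        push_cast
        ring
      rw [hx2]
      exact add_mem (add_mem (add_mem
        (Ideal.mul_mem_left _ _ (Ideal.mul_mem_mul haI haJ))
        (Ideal.mul_mem_left _ _ (Ideal.mul_mem_mul hbI haJ)))
        (Ideal.mul_mem_left _ _ (Ideal.mul_mem_mul haI hcJ)))
        (Ideal.mul_mem_left _ _ (Ideal.mul_mem_mul hbI hcJ))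
  -- surjectivity
  have hsurj1 : Function.Surjective π1 := by
    rintro ⟨u, v, w⟩
    obtain ⟨m, hm⟩ := ZMod.intCast_surjective u
    obtain ⟨k, hk⟩ := ZMod.intCast_surjective v
    obtain ⟨l, hl⟩ := ZMod.intCast_surjective w
    refine ⟨⟨_, hmk m 0 k l⟩, ?_⟩
    obtain ⟨e1, e2, e3, e4⟩ := hU ⟨_, hmk m 0 k l⟩ m 0 k l rfl
    rw [hπ1, e1, e3, e4, hm, hk, hl]
  have hsurjJ : Function.Surjective πJ := by
    rintro ⟨u, v, w⟩
    obtain ⟨m, hm⟩ := ZMod.intCast_surjective u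
    obtain ⟨n, hn⟩ := ZMod.intCast_surjective v
    obtain ⟨l, hl⟩ := ZMod.intCast_surjective w
    refine ⟨⟨_, hmk m n 0 l⟩, ?_⟩
    obtain ⟨e1, e2, e3, e4⟩ := hU ⟨_, hmk m n 0 l⟩ m n 0 l rfl
    rw [hπJ, e1, e2, e4, hm, hn, hl]
  have hsurj2 : Function.Surjective π2 := by
    rintro ⟨u, v, w, z⟩
    obtain ⟨m, hm⟩ := ZMod.intCast_surjective u
    obtain ⟨n, hn⟩ := ZMod.intCast_surjective v
    obtain ⟨k, hk⟩ := ZMod.intCast_surjective w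
    obtain ⟨l, hl⟩ := ZMod.intCast_surjective z
    refine ⟨⟨_, hmk m n k l⟩, ?_⟩
    obtain ⟨e1, e2, e3, e4⟩ := hU ⟨_, hmk m n k l⟩ m n k l rfl
    rw [hπ2, e1, e2, e3, e4, hm, hn, hk, hl]
  -- cardinalities
  have hcard1 : Nat.card (↥R ⧸ Ideal.span {a, b}) = p^3 := by
    rw [card_quot (Ideal.span {a, b}) π1 hsurj1 hkerI]
    simp [Nat.card_prod, Nat.card_zmod]
    ring
  have hcardJ : Nat.card (↥R ⧸ Ideal.span {a, c}) = p^3 := by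
    rw [card_quot (Ideal.span {a, c}) πJ hsurjJ hkerJ]
    simp [Nat.card_prod, Nat.card_zmod]
    ring
  have hcard2 : Nat.card (↥R ⧸ (Ideal.span {a, b} * Ideal.span {a, c})) = p^5 := by
    rw [card_quot _ π2 hsurj2 hker2]
    simp [Nat.card_prod, Nat.card_zmod]
    ring
  refine ⟨hcard1, hcardJ, hcard2, ?_⟩
  rw [hcard1, hcardJ, hcard2]
  have h6 : p^3 * p^3 = p^6 := by ring
  rw [h6]
  exact Nat.pow_lt_pow_right hp.one_lt (by norm_num)
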